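/- For all integers q ≥ 2 and n ≥ 1, the family 𝓝_q is n-cell implementable under scenario (◦∗) if and only if q ≤ 2 when n = 1, and q ≤ n when n ≥ 2. -/

import Mathlib

/-- The alphabet 𝔹• = {0, 1, ∗, •}. -/
inductive BB : Type
  | zero
  | one
  | star
  | reject
deriving DecidableEq

instance instFintypeBB : Fintype BB :=
  ⟨{BB.zero, BB.one, BB.star, BB.reject}, fun x => by cases x <;> simp⟩

/-- The cell function T : 𝔹• × 𝔹• → 𝔹: T(u,ϑ) = 1 iff u = ∗, or ϑ = ∗,
or u,ϑ ∈ 𝔹 with u = ϑ. -/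
def Tcell : BB → BB → Bool
  | BB.star, _ => true
  | _, BB.star => true
  | BB.zero, BB.zero => true
  | BB.one, BB.one => true
  | _, _ => false

/-- The word-level function T(u,ϑ) = ⋀_{j<n} T(u_j, ϑ_j). -/
def Tword {n : ℕ} (u θ : Fin n → BB) : Bool :=
  decide (∀ j, Tcell (u j) (θ j) = true)

/-- The alphabet 𝔹 = {0,1} ⊆ 𝔹•. -/
def Bcirc : Set BB := {BB.zero, BB.one}

/-- The alphabet 𝔹∗ = {0,1,∗} ⊆ 𝔹•. -/
def Bstar : Set BB := {BB.zero, BB.one, BB.star}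

/-- The full alphabet 𝔹•. -/
def Bdot : Set BB := Set.univ

/-- A family Φ of functions {0,…,q−1} → 𝔹 is n-cell implementable under
scenario (A,B) if there are mappings u : {0,…,q−1} → A^n and ϑ : Φ → B^n
with f(x) = T(u(x), ϑ(f)) for all f ∈ Φ and x. -/
def Implementable (A B : Set BB) (n q : ℕ) (Φ : Set (Fin q → Bool)) : Prop :=
  ∃ u : Fin q → Fin n → BB, ∃ θ : (Fin q → Bool) → Fin n → BB,
    (∀ x j, u x j ∈ A) ∧ (∀ f ∈ Φ, ∀ j, θ f j ∈ B) ∧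
    (∀ f ∈ Φ, ∀ x, f x = Tword (u x) (θ f))

/-- The family 𝓔_q = { x ↦ [x = t] : t ∈ [q⟩ }. -/
def Eset (q : ℕ) : Set (Fin q → Bool) :=
  { f | ∃ t : Fin q, f = fun x => decide (x = t) }

/-- The family 𝓝_q = { x ↦ [x ≠ t] : t ∈ [q⟩ }. -/
def Nset (q : ℕ) : Set (Fin q → Bool) :=
  { f | ∃ t : Fin q, f = fun x => decide (x ≠ t) }

/-- The family 𝓖_q = { x ↦ [x ≥ t] : t ∈ [q⟩ }. -/
def Gset (q : ℕ) : Set (Fin q → Bool) :=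
  { f | ∃ t : Fin q, f = fun x => decide (t ≤ x) }

/-- The family 𝓛_q = { x ↦ [x ≤ t] : t ∈ [q⟩ }. -/
def Lset (q : ℕ) : Set (Fin q → Bool) :=
  { f | ∃ t : Fin q, f = fun x => decide (x ≤ t) }

lemma tword_eq {n : ℕ} (u θ : Fin n → BB) :
    Tword u θ = true ↔ ∀ j, Tcell (u j) (θ j) = true := by
  simp [Tword]

lemma Tcell_star_right (b : BB) : Tcell b BB.star = true := by cases b <;> rfl

lemma construct1 (q n : ℕ) (h : q ≤ n) : Implementable Bcirc Bstar n q (Nset q) := by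
  refine ⟨fun x j => if (j : ℕ) = (x : ℕ) then BB.one else BB.zero,
    fun f j => if hj : (j : ℕ) < q then (if f ⟨j, hj⟩ = false then BB.zero else BB.star)
      else BB.star, ?_, ?_, ?_⟩
  · intro x j
    by_cases hj : (j : ℕ) = (x : ℕ) <;> simp [Bcirc, hj]
  · intro f _ j
    dsimp only
    unfold Bstar
    split
    · split <;> simp
    · simp
  · rintro f ⟨t, rfl⟩ x
    by_cases hxt : x = t
    · subst hxt
      simp only [ne_eq, not_true_eq_false, decide_false]
      symm
      apply Bool.eq_false_iff.mpr
      intro htrue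
      rw [tword_eq] at htrue
      have h1 := htrue ⟨(x : ℕ), lt_of_lt_of_le x.isLt h⟩
      simp only [x.isLt, dite_true, Fin.eta] at h1
      simp [Tcell, x.isLt] at h1
    · have hval : (x : ℕ) ≠ (t : ℕ) := fun hc => hxt (Fin.ext hc)
      simp only [ne_eq, hxt, not_false_eq_true, decide_true]
      symm
      rw [tword_eq]
      intro j
      by_cases hj : (j : ℕ) < q
      · rw [dif_pos hj]
        split <;> split <;>
          first
            | rfl
            | exact Tcell_star_right _
            | (exfalso
               rename_i hA hB
               simp only [decide_eq_false_iff_not, not_not] at hB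
               apply hval
               rw [← hA]
               exact congrArg Fin.val hB)
      · rw [dif_neg hj]
        exact Tcell_star_right _

lemma construct2 (n : ℕ) (hn : 1 ≤ n) : Implementable Bcirc Bstar n 2 (Nset 2) := by
  refine ⟨fun x _ => if x = 0 then BB.zero else BB.one,
    fun f j => if (j : ℕ) = 0 then (if f 0 then BB.zero else BB.one) else BB.star,
    ?_, ?_, ?_⟩
  · intro x j
    by_cases hx : x = 0 <;> simp [Bcirc, hx]
  · intro f _ j
    dsimp only
    unfold Bstar
    split
    · split <;> simp
    · simp
  · rintro f ⟨t, rfl⟩ x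
    by_cases hxt : x = t
    · subst hxt
      simp only [ne_eq, not_true_eq_false, decide_false]
      symm
      apply Bool.eq_false_iff.mpr
      intro htrue
      rw [tword_eq] at htrue
      have h1 := htrue ⟨0, hn⟩
      fin_cases x <;> simp [Tcell] at h1
    · simp only [ne_eq, hxt, not_false_eq_true, decide_true]
      symm
      rw [tword_eq]
      intro j
      by_cases hj : (j : ℕ) = 0
      · rw [if_pos hj]
        fin_cases x <;> fin_cases t <;> simp_all [Tcell]
      · rw [if_neg hj]
        exact Tcell_star_right _

lemma exists_third {q : ℕ} (hq3 : 3 ≤ q) (t s : Fin q) :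
    ∃ x : Fin q, x ≠ t ∧ x ≠ s := by
  by_contra hno
  push_neg at hno
  have hsub : (Finset.univ : Finset (Fin q)) ⊆ {t, s} := by
    intro x _
    simp only [Finset.mem_insert, Finset.mem_singleton]
    by_cases hx : x = t
    · exact Or.inl hx
    · exact Or.inr (hno x hx)
  have h1 : (Finset.univ : Finset (Fin q)).card ≤ ({t, s} : Finset (Fin q)).card :=
    Finset.card_le_card hsub
  have h2 : ({t, s} : Finset (Fin q)).card ≤ 2 :=
    (Finset.card_insert_le _ _).trans (by simp)
  simp only [Finset.card_univ, Fintype.card_fin] at h1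
  omega

lemma necessity (q n : ℕ) (hq3 : 3 ≤ q) (h : Implementable Bcirc Bstar n q (Nset q)) :
    q ≤ n := by
  obtain ⟨u, θ, hu, hθ, hc⟩ := h
  have hmem : ∀ t : Fin q, (fun x => decide (x ≠ t)) ∈ Nset q := fun t => ⟨t, rfl⟩
  have hfalse : ∀ t : Fin q,
      ∃ j, Tcell (u t j) (θ (fun x => decide (x ≠ t)) j) = false := by
    intro t
    have ht := hc _ (hmem t) t
    simp only [ne_eq, not_true_eq_false, decide_false] at ht
    by_contra hno
    push_neg at hno
    have htw : Tword (u t) (θ (fun x => decide (x ≠ t))) = true := by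
      rw [tword_eq]
      intro j
      have hj := hno j
      revert hj
      cases Tcell (u t j) (θ (fun x => decide (x ≠ t)) j) <;> simp
    rw [htw] at ht
    exact absurd ht (by simp)
  choose J hJ using hfalse
  have hinj : Function.Injective J := by
    intro t s hts
    by_contra hne
    have h1 := hJ t
    have h2 := hJ s
    rw [← hts] at h2
    have h3 : Tcell (u s (J t)) (θ (fun x => decide (x ≠ t)) (J t)) = true := by
      have hx := hc _ (hmem t) s
      simp only [ne_eq, Ne.symm hne, not_false_eq_true, decide_true] at hx
      exact (tword_eq _ _).mp hx.symm (J t)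
    have h4 : Tcell (u t (J t)) (θ (fun x => decide (x ≠ s)) (J t)) = true := by
      have hx := hc _ (hmem s) t
      simp only [ne_eq, hne, not_false_eq_true, decide_true] at hx
      exact (tword_eq _ _).mp hx.symm (J t)
    obtain ⟨x, hxt, hxs⟩ := exists_third hq3 t s
    have h5 : Tcell (u x (J t)) (θ (fun y => decide (y ≠ t)) (J t)) = true := by
      have hx := hc _ (hmem t) x
      simp only [ne_eq, hxt, not_false_eq_true, decide_true] at hx
      exact (tword_eq _ _).mp hx.symm (J t)
    have h6 : Tcell (u x (J t)) (θ (fun y => decide (y ≠ s)) (J t)) = true := by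
      have hx := hc _ (hmem s) x
      simp only [ne_eq, hxs, not_false_eq_true, decide_true] at hx
      exact (tword_eq _ _).mp hx.symm (J t)
    have hut := hu t (J t)
    have hus := hu s (J t)
    have hux := hu x (J t)
    have hθt := hθ _ (hmem t) (J t)
    have hθs := hθ _ (hmem s) (J t)
    simp only [Bcirc, Set.mem_insert_iff, Set.mem_singleton_iff] at hut hus hux
    simp only [Bstar, Set.mem_insert_iff, Set.mem_singleton_iff] at hθt hθs
    clear hc hu hθ hJ hts hmem
    revert h1 h2 h3 h4 h5 h6
    rcases hut with e1 | e1 <;> rcases hus with e2 | e2 <;> rcases hux with e3 | e3 <;>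
      rcases hθt with e4 | e4 | e4 <;> rcases hθs with e5 | e5 | e5 <;>
      simp only [e1, e2, e3, e4, e5, Tcell] <;> simp
  have hcard := Fintype.card_le_of_injective J hinj
  simpa using hcard

theorem Nset_implementable_circStar (q n : ℕ) (hq : 2 ≤ q) (hn : 1 ≤ n) :
    Implementable Bcirc Bstar n q (Nset q) ↔
      (if n = 1 then q ≤ 2 else q ≤ n) := by
  constructor
  · intro h
    by_cases hq3 : 3 ≤ q
    · have := necessity q n hq3 h
      split <;> omega
    · split <;> omega
  · intro h
    by_cases hqn : q ≤ n
    · exact construct1 q n hqn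
    · have hq2 : q = 2 := by split at h <;> omega
      subst hq2
      exact construct2 n hn
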